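/- Let A and B be subgroups of a finite group G and let N be a normal subgroup of G. Then |AN ∩ B : A ∩ B| ≤ |N : N ∩ A|, where AN denotes the subgroup generated by A and N (which equals the product set AN since N is normal). -/

import Mathlib

theorem stmt2 {G : Type*} [Group G] [Finite G] (A B N : Subgroup G) [N.Normal] :
    (A ⊓ B).relIndex ((A ⊔ N) ⊓ B) ≤ (N ⊓ A).relIndex N := by
  have hAB : A ⊓ B = A ⊓ ((A ⊔ N) ⊓ B) := by
    rw [← inf_assoc, inf_of_le_left (le_sup_left : A ≤ A ⊔ N)]
  have h1 : (A ⊓ B).relIndex ((A ⊔ N) ⊓ B) = A.relIndex ((A ⊔ N) ⊓ B) := by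
    rw [hAB, Subgroup.inf_relIndex_right]
  have hne : A.relIndex (A ⊔ N) ≠ 0 := Subgroup.index_ne_zero_of_finite
  have h2 : A.relIndex ((A ⊔ N) ⊓ B) ≤ A.relIndex (A ⊔ N) :=
    Subgroup.relIndex_le_of_le_right inf_le_left hne
  have h3 : A.relIndex (A ⊔ N) = (N ⊓ A).relIndex N := by
    have e1 : (N ⊓ A).relIndex N * N.relIndex (A ⊔ N) = (N ⊓ A).relIndex (A ⊔ N) :=
      Subgroup.relIndex_mul_relIndex _ _ _ inf_le_left le_sup_right
    have e2 : (N ⊓ A).relIndex A * A.relIndex (A ⊔ N) = (N ⊓ A).relIndex (A ⊔ N) :=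
      Subgroup.relIndex_mul_relIndex _ _ _ inf_le_right le_sup_left
    have e3 : N.relIndex (A ⊔ N) = N.relIndex A := Subgroup.relIndex_sup_right A N
    have e4 : (N ⊓ A).relIndex A = N.relIndex A := Subgroup.inf_relIndex_right N A
    have hx : N.relIndex A ≠ 0 := Subgroup.index_ne_zero_of_finite
    have key : (N ⊓ A).relIndex N * N.relIndex A = A.relIndex (A ⊔ N) * N.relIndex A :=
      calc (N ⊓ A).relIndex N * N.relIndex A
          = (N ⊓ A).relIndex N * N.relIndex (A ⊔ N) := by rw [e3]
        _ = (N ⊓ A).relIndex (A ⊔ N) := e1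
        _ = (N ⊓ A).relIndex A * A.relIndex (A ⊔ N) := e2.symm
        _ = A.relIndex (A ⊔ N) * N.relIndex A := by rw [e4, mul_comm]
    exact (Nat.eq_of_mul_eq_mul_right (Nat.pos_of_ne_zero hx) key).symm
  rw [h1, ← h3]; exact h2
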